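/- Let h, k and a family {fₙ}_{n≥1} be self-maps of a metric space (X,d) such that for every n ≥ 1 the pairs (fₙ,h) and (f_{n+1},k) are each subcompatible and subsequentially continuous with a common witnessing sequence. Let 0 < a < 1, α, β ∈ (0,1], p a positive integer, and F : ℝ₊ → ℝ₊ upper semicontinuous with F(t) < t for every t > 0. Suppose that for every n ≥ 1 and all x, y ∈ X: d(fₙx, f_{n+1}y)^p ≤ F( a·d(hx,ky)^p + (1−a)·max{ α·d(fₙx,hx)^p, β·d(f_{n+1}y,ky)^p, d(fₙx,hx)^{p/2}·d(fₙx,ky)^{p/2}, d(fₙx,ky)^{p/2}·d(hx,f_{n+1}y)^{p/2}, (d(fₙx,hx)^p + d(f_{n+1}y,ky)^p)/2 } ). Then h, k and all the maps fₙ (n ≥ 1) have a unique common fixed point. -/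

import Mathlib

open Filter Topology NNReal

/-- The pair `(f, g)` of self-maps of a metric space is subcompatible and
subsequentially continuous with a common witnessing sequence: there is a
sequence `x` and a point `t` with `lim f xₙ = lim g xₙ = t`,
`lim d(f (g xₙ), g (f xₙ)) = 0`, `lim f (g xₙ) = f t` and `lim g (f xₙ) = g t`. -/
def SubcompSubseqCont {X : Type*} [MetricSpace X] (f g : X → X) : Prop :=
  ∃ (x : ℕ → X) (t : X),
    Tendsto (fun n => f (x n)) atTop (𝓝 t) ∧
    Tendsto (fun n => g (x n)) atTop (𝓝 t) ∧
    Tendsto (fun n => dist (f (g (x n))) (g (f (x n)))) atTop (𝓝 (0 : ℝ)) ∧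
    Tendsto (fun n => f (g (x n))) atTop (𝓝 (f t)) ∧
    Tendsto (fun n => g (f (x n))) atTop (𝓝 (g t))

private lemma nn_arg_eq {a : ℝ≥0} (D : ℝ≥0) (ha : a ≤ 1) : a * D + (1 - a) * D = D := by
  rw [← add_mul, add_tsub_cancel_of_le ha, one_mul]

private lemma nn_half_mul (x : ℝ≥0) {p : ℕ} (hp : 0 < p) :
    x ^ ((p : ℝ) / 2) * x ^ ((p : ℝ) / 2) = x ^ p := by
  have h1 : (p : ℝ) / 2 + (p : ℝ) / 2 = (p : ℝ) := by ring
  have h2 : (p : ℝ) / 2 + (p : ℝ) / 2 ≠ 0 := by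
    rw [h1]; exact_mod_cast hp.ne'
  rw [← NNReal.rpow_add' h2 x, h1, NNReal.rpow_natCast]

private lemma nn_max_zero (x : ℝ≥0) : max x 0 = x := max_eq_left zero_le
private lemma nn_zero_max (x : ℝ≥0) : max 0 x = x := max_eq_right zero_le

private lemma usc_limit {F : ℝ≥0 → ℝ≥0} (hFusc : UpperSemicontinuous F)
    (hF : ∀ t : ℝ≥0, 0 < t → F t < t) {L A : ℕ → ℝ≥0} {D : ℝ≥0}
    (hL : Tendsto L atTop (𝓝 D)) (hA : Tendsto A atTop (𝓝 D))
    (hle : ∀ i, L i ≤ F (A i)) : D = 0 := by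
  by_contra hD
  have hD' : 0 < D := zero_lt_iff.mpr hD
  obtain ⟨y, hy1, hy2⟩ := exists_between (hF D hD')
  have hev : ∀ᶠ i in atTop, F (A i) < y := hA.eventually (hFusc D y hy1)
  have : D ≤ y := le_of_tendsto hL (hev.mono fun i hi => (hle i).trans hi.le)
  exact absurd this (not_le.mpr hy2)

private lemma tendsto_nnrpow_const {u : ℕ → ℝ≥0} {c : ℝ≥0} {r : ℝ} (hr : 0 ≤ r)
    (hu : Tendsto u atTop (𝓝 c)) : Tendsto (fun i => u i ^ r) atTop (𝓝 (c ^ r)) :=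
  (NNReal.continuousAt_rpow_const (Or.inr hr)).tendsto.comp hu

theorem common_fixed_point_gregus_family {X : Type*} [MetricSpace X]
    (h k : X → X) (f : ℕ → X → X)
    (hfh : ∀ n : ℕ, 1 ≤ n → SubcompSubseqCont (f n) h)
    (hfk : ∀ n : ℕ, 1 ≤ n → SubcompSubseqCont (f (n + 1)) k)
    (a α β : ℝ≥0) (ha0 : 0 < a) (ha1 : a < 1)
    (hα : 0 < α ∧ α ≤ 1) (hβ : 0 < β ∧ β ≤ 1)
    (p : ℕ) (hp : 0 < p)
    (F : ℝ≥0 → ℝ≥0) (hFusc : UpperSemicontinuous F)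
    (hF : ∀ t : ℝ≥0, 0 < t → F t < t)
    (hineq : ∀ n : ℕ, 1 ≤ n → ∀ x y : X,
      nndist (f n x) (f (n + 1) y) ^ p ≤
        F (a * nndist (h x) (k y) ^ p + (1 - a) *
          max (max (max (max (α * nndist (f n x) (h x) ^ p)
            (β * nndist (f (n + 1) y) (k y) ^ p))
            (nndist (f n x) (h x) ^ ((p : ℝ) / 2) *
              nndist (f n x) (k y) ^ ((p : ℝ) / 2)))
            (nndist (f n x) (k y) ^ ((p : ℝ) / 2) *
              nndist (h x) (f (n + 1) y) ^ ((p : ℝ) / 2)))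
            ((nndist (f n x) (h x) ^ p + nndist (f (n + 1) y) (k y) ^ p) / 2))) :
    ∃! t : X, h t = t ∧ k t = t ∧ ∀ n : ℕ, 1 ≤ n → f n t = t := by
  have hc2 : ((p : ℝ) / 2) ≠ 0 := div_ne_zero (Nat.cast_ne_zero.mpr hp.ne') two_ne_zero
  have hr : (0 : ℝ) ≤ (p : ℝ) / 2 := by positivity
  obtain ⟨x1, t, hft, hht, hd1, hfg1, hgf1⟩ := hfh 1 le_rfl
  obtain ⟨x2, s, hfs, hks, hd2, hfg2, hgf2⟩ := hfk 1 le_rfl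
  -- coincidence points
  have hco1 : f 1 t = h t :=
    dist_eq_zero.mp (tendsto_nhds_unique (hfg1.dist hgf1) hd1)
  have hco2 : f (1 + 1) s = k s :=
    dist_eq_zero.mp (tendsto_nhds_unique (hfg2.dist hgf2) hd2)
  -- step 3 : h t = k s
  have huv : h t = k s := by
    have key := hineq 1 le_rfl t s
    rw [hco1, hco2] at key
    simp only [nndist_self, zero_pow hp.ne', NNReal.zero_rpow hc2, mul_zero, zero_mul,
      add_zero, zero_add, zero_div, max_self, nn_zero_max, nn_max_zero,
      nn_half_mul _ hp] at key
    rw [nn_arg_eq _ ha1.le] at key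
    by_contra hne
    have hpos : 0 < nndist (h t) (k s) ^ p :=
      zero_lt_iff.mpr (fun h0 => hne (nndist_eq_zero.mp ((pow_eq_zero_iff hp.ne').mp h0)))
    exact absurd (key.trans_lt (hF _ hpos)) (lt_irrefl _)
  -- step 4 : t = k s  (hence h t = t)
  have hts : t = k s := by
    have hL : Tendsto (fun i => nndist (f 1 (x1 i)) (k s) ^ p) atTop
        (𝓝 (nndist t (k s) ^ p)) := (hft.nndist tendsto_const_nhds).pow p
    have n1 : Tendsto (fun i => nndist (f 1 (x1 i)) (h (x1 i))) atTop (𝓝 (nndist t t)) :=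
      hft.nndist hht
    have n2 : Tendsto (fun i => nndist (f 1 (x1 i)) (k s)) atTop (𝓝 (nndist t (k s))) :=
      hft.nndist tendsto_const_nhds
    have n3 : Tendsto (fun i => nndist (h (x1 i)) (k s)) atTop (𝓝 (nndist t (k s))) :=
      hht.nndist tendsto_const_nhds
    have hA : Tendsto (fun i =>
        a * nndist (h (x1 i)) (k s) ^ p + (1 - a) *
          max (max (max (max (α * nndist (f 1 (x1 i)) (h (x1 i)) ^ p)
            (β * nndist (k s) (k s) ^ p))
            (nndist (f 1 (x1 i)) (h (x1 i)) ^ ((p : ℝ) / 2) *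
              nndist (f 1 (x1 i)) (k s) ^ ((p : ℝ) / 2)))
            (nndist (f 1 (x1 i)) (k s) ^ ((p : ℝ) / 2) *
              nndist (h (x1 i)) (k s) ^ ((p : ℝ) / 2)))
            ((nndist (f 1 (x1 i)) (h (x1 i)) ^ p + nndist (k s) (k s) ^ p) / 2)) atTop
        (𝓝 (a * nndist t (k s) ^ p + (1 - a) *
          max (max (max (max (α * nndist t t ^ p)
            (β * nndist (k s) (k s) ^ p))
            (nndist t t ^ ((p : ℝ) / 2) * nndist t (k s) ^ ((p : ℝ) / 2)))
            (nndist t (k s) ^ ((p : ℝ) / 2) * nndist t (k s) ^ ((p : ℝ) / 2)))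
            ((nndist t t ^ p + nndist (k s) (k s) ^ p) / 2))) := by
      have hmax : Tendsto (fun i =>
          max (max (max (max (α * nndist (f 1 (x1 i)) (h (x1 i)) ^ p)
            (β * nndist (k s) (k s) ^ p))
            (nndist (f 1 (x1 i)) (h (x1 i)) ^ ((p : ℝ) / 2) *
              nndist (f 1 (x1 i)) (k s) ^ ((p : ℝ) / 2)))
            (nndist (f 1 (x1 i)) (k s) ^ ((p : ℝ) / 2) *
              nndist (h (x1 i)) (k s) ^ ((p : ℝ) / 2)))
            ((nndist (f 1 (x1 i)) (h (x1 i)) ^ p + nndist (k s) (k s) ^ p) / 2)) atTop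
          (𝓝 (max (max (max (max (α * nndist t t ^ p)
            (β * nndist (k s) (k s) ^ p))
            (nndist t t ^ ((p : ℝ) / 2) * nndist t (k s) ^ ((p : ℝ) / 2)))
            (nndist t (k s) ^ ((p : ℝ) / 2) * nndist t (k s) ^ ((p : ℝ) / 2)))
            ((nndist t t ^ p + nndist (k s) (k s) ^ p) / 2))) :=
        (((((n1.pow p).const_mul α).max tendsto_const_nhds).max
          ((tendsto_nnrpow_const hr n1).mul (tendsto_nnrpow_const hr n2))).max
          ((tendsto_nnrpow_const hr n2).mul (tendsto_nnrpow_const hr n3))).max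
          (((n1.pow p).add tendsto_const_nhds).div_const 2)
      exact ((n3.pow p).const_mul a).add (hmax.const_mul (1 - a))
    have hEeq : (a * nndist t (k s) ^ p + (1 - a) *
          max (max (max (max (α * nndist t t ^ p)
            (β * nndist (k s) (k s) ^ p))
            (nndist t t ^ ((p : ℝ) / 2) * nndist t (k s) ^ ((p : ℝ) / 2)))
            (nndist t (k s) ^ ((p : ℝ) / 2) * nndist t (k s) ^ ((p : ℝ) / 2)))
            ((nndist t t ^ p + nndist (k s) (k s) ^ p) / 2)) = nndist t (k s) ^ p := by
      simp only [nndist_self, zero_pow hp.ne', NNReal.zero_rpow hc2, mul_zero, zero_mul,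
        add_zero, zero_add, zero_div, max_self, nn_zero_max, nn_max_zero,
        nn_half_mul _ hp]
      rw [nn_arg_eq _ ha1.le]
    rw [hEeq] at hA
    have hle : ∀ i, nndist (f 1 (x1 i)) (k s) ^ p ≤
        F (a * nndist (h (x1 i)) (k s) ^ p + (1 - a) *
          max (max (max (max (α * nndist (f 1 (x1 i)) (h (x1 i)) ^ p)
            (β * nndist (k s) (k s) ^ p))
            (nndist (f 1 (x1 i)) (h (x1 i)) ^ ((p : ℝ) / 2) *
              nndist (f 1 (x1 i)) (k s) ^ ((p : ℝ) / 2)))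
            (nndist (f 1 (x1 i)) (k s) ^ ((p : ℝ) / 2) *
              nndist (h (x1 i)) (k s) ^ ((p : ℝ) / 2)))
            ((nndist (f 1 (x1 i)) (h (x1 i)) ^ p + nndist (k s) (k s) ^ p) / 2)) := by
      intro i
      have := hineq 1 le_rfl (x1 i) s
      rwa [hco2] at this
    have := usc_limit hFusc hF hL hA hle
    exact nndist_eq_zero.mp ((pow_eq_zero_iff hp.ne').mp this)
  have hht' : h t = t := by rw [huv, ← hts]
  have hf1t : f 1 t = t := by rw [hco1, hht']
  -- step 5 : t = s (hence k t = t)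
  have hts2 : t = s := by
    have hL : Tendsto (fun i => nndist t (f (1 + 1) (x2 i)) ^ p) atTop
        (𝓝 (nndist t s ^ p)) := (Tendsto.nndist tendsto_const_nhds hfs).pow p
    have n1 : Tendsto (fun i => nndist (f (1 + 1) (x2 i)) (k (x2 i))) atTop
        (𝓝 (nndist s s)) := hfs.nndist hks
    have n2 : Tendsto (fun i => nndist t (k (x2 i))) atTop (𝓝 (nndist t s)) :=
      Tendsto.nndist tendsto_const_nhds hks
    have n3 : Tendsto (fun i => nndist t (f (1 + 1) (x2 i))) atTop (𝓝 (nndist t s)) :=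
      Tendsto.nndist tendsto_const_nhds hfs
    have hA : Tendsto (fun i =>
        a * nndist t (k (x2 i)) ^ p + (1 - a) *
          max (max (max (max (α * nndist t t ^ p)
            (β * nndist (f (1 + 1) (x2 i)) (k (x2 i)) ^ p))
            (nndist t t ^ ((p : ℝ) / 2) * nndist t (k (x2 i)) ^ ((p : ℝ) / 2)))
            (nndist t (k (x2 i)) ^ ((p : ℝ) / 2) *
              nndist t (f (1 + 1) (x2 i)) ^ ((p : ℝ) / 2)))
            ((nndist t t ^ p + nndist (f (1 + 1) (x2 i)) (k (x2 i)) ^ p) / 2)) atTop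
        (𝓝 (a * nndist t s ^ p + (1 - a) *
          max (max (max (max (α * nndist t t ^ p)
            (β * nndist s s ^ p))
            (nndist t t ^ ((p : ℝ) / 2) * nndist t s ^ ((p : ℝ) / 2)))
            (nndist t s ^ ((p : ℝ) / 2) * nndist t s ^ ((p : ℝ) / 2)))
            ((nndist t t ^ p + nndist s s ^ p) / 2))) := by
      have hmax : Tendsto (fun i =>
          max (max (max (max (α * nndist t t ^ p)
            (β * nndist (f (1 + 1) (x2 i)) (k (x2 i)) ^ p))
            (nndist t t ^ ((p : ℝ) / 2) * nndist t (k (x2 i)) ^ ((p : ℝ) / 2)))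
            (nndist t (k (x2 i)) ^ ((p : ℝ) / 2) *
              nndist t (f (1 + 1) (x2 i)) ^ ((p : ℝ) / 2)))
            ((nndist t t ^ p + nndist (f (1 + 1) (x2 i)) (k (x2 i)) ^ p) / 2)) atTop
          (𝓝 (max (max (max (max (α * nndist t t ^ p)
            (β * nndist s s ^ p))
            (nndist t t ^ ((p : ℝ) / 2) * nndist t s ^ ((p : ℝ) / 2)))
            (nndist t s ^ ((p : ℝ) / 2) * nndist t s ^ ((p : ℝ) / 2)))
            ((nndist t t ^ p + nndist s s ^ p) / 2))) :=
        ((((tendsto_const_nhds.max ((n1.pow p).const_mul β)).max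
          (tendsto_const_nhds.mul (tendsto_nnrpow_const hr n2))).max
          ((tendsto_nnrpow_const hr n2).mul (tendsto_nnrpow_const hr n3))).max
          ((tendsto_const_nhds.add (n1.pow p)).div_const 2))
      exact ((n2.pow p).const_mul a).add (hmax.const_mul (1 - a))
    have hEeq : (a * nndist t s ^ p + (1 - a) *
          max (max (max (max (α * nndist t t ^ p)
            (β * nndist s s ^ p))
            (nndist t t ^ ((p : ℝ) / 2) * nndist t s ^ ((p : ℝ) / 2)))
            (nndist t s ^ ((p : ℝ) / 2) * nndist t s ^ ((p : ℝ) / 2)))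
            ((nndist t t ^ p + nndist s s ^ p) / 2)) = nndist t s ^ p := by
      simp only [nndist_self, zero_pow hp.ne', NNReal.zero_rpow hc2, mul_zero, zero_mul,
        add_zero, zero_add, zero_div, max_self, nn_zero_max, nn_max_zero,
        nn_half_mul _ hp]
      rw [nn_arg_eq _ ha1.le]
    rw [hEeq] at hA
    have hle : ∀ i, nndist t (f (1 + 1) (x2 i)) ^ p ≤
        F (a * nndist t (k (x2 i)) ^ p + (1 - a) *
          max (max (max (max (α * nndist t t ^ p)
            (β * nndist (f (1 + 1) (x2 i)) (k (x2 i)) ^ p))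
            (nndist t t ^ ((p : ℝ) / 2) * nndist t (k (x2 i)) ^ ((p : ℝ) / 2)))
            (nndist t (k (x2 i)) ^ ((p : ℝ) / 2) *
              nndist t (f (1 + 1) (x2 i)) ^ ((p : ℝ) / 2)))
            ((nndist t t ^ p + nndist (f (1 + 1) (x2 i)) (k (x2 i)) ^ p) / 2)) := by
      intro i
      have := hineq 1 le_rfl t (x2 i)
      rwa [hf1t, hht'] at this
    have := usc_limit hFusc hF hL hA hle
    exact nndist_eq_zero.mp ((pow_eq_zero_iff hp.ne').mp this)
  have hkt' : k t = t := by rw [hts2, ← huv, hht']; exact hts2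
  -- step 6 : induction
  have hstep : ∀ n : ℕ, 1 ≤ n → f n t = t → f (n + 1) t = t := by
    intro n hn hfn
    by_contra hne
    have key := hineq n hn t t
    rw [hfn, hht', hkt'] at key
    simp only [nndist_self, zero_pow hp.ne', NNReal.zero_rpow hc2, mul_zero, zero_mul,
      add_zero, zero_add, max_self, nn_zero_max, nn_max_zero,
      nndist_comm (f (n + 1) t) t] at key
    set D : ℝ≥0 := nndist t (f (n + 1) t) ^ p with hD
    have hDpos : 0 < D :=
      zero_lt_iff.mpr (fun h0 => hne (nndist_eq_zero.mp ((pow_eq_zero_iff hp.ne').mp h0)).symm)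
    have hmaxle : max (β * D) (D / 2) ≤ D := by
      apply max_le
      · exact mul_le_of_le_one_left zero_le hβ.2
      · exact half_le_self zero_le
    have hmaxpos : 0 < max (β * D) (D / 2) :=
      lt_of_lt_of_le (by positivity) (le_max_right _ _)
    have hcpos : 0 < (1 - a) * max (β * D) (D / 2) := mul_pos (tsub_pos_of_lt ha1) hmaxpos
    have hclt : (1 - a) * max (β * D) (D / 2) < D :=
      lt_of_le_of_lt (mul_le_mul_right hmaxle _)
        (mul_lt_of_lt_one_left hDpos (tsub_lt_self one_pos ha0))
    have : D < D := (key.trans_lt (hF _ hcpos)).trans hclt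
    exact absurd this (lt_irrefl _)
  have hfnt : ∀ n : ℕ, 1 ≤ n → f n t = t := by
    intro n hn
    induction n, hn using Nat.le_induction with
    | base => exact hf1t
    | succ n hn ih => exact hstep n hn ih
  refine ⟨t, ⟨hht', hkt', hfnt⟩, ?_⟩
  rintro t' ⟨hht2, hkt2, hfn2⟩
  have key := hineq 1 le_rfl t' t
  rw [hfn2 1 le_rfl, hfnt (1 + 1) (by norm_num), hht2, hkt'] at key
  simp only [nndist_self, zero_pow hp.ne', NNReal.zero_rpow hc2, mul_zero, zero_mul,
    add_zero, zero_add, zero_div, max_self, nn_zero_max, nn_max_zero,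
    nn_half_mul _ hp] at key
  rw [nn_arg_eq _ ha1.le] at key
  by_contra hne
  have hpos : 0 < nndist t' t ^ p :=
    zero_lt_iff.mpr (fun h0 => hne (nndist_eq_zero.mp ((pow_eq_zero_iff hp.ne').mp h0)))
  exact absurd (key.trans_lt (hF _ hpos)) (lt_irrefl _)
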